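/- Let n ≥ 1, let 0 < β < 1/2, 0 < δ < 1/2 and c > 0, and let π : ℝⁿ → ℝ be measurable with 0 ≤ π(y) ≤ c(‖y‖^{-n-2β} + ‖y‖^{-n-2δ}) for all y ≠ 0. Let R > 0, M > 0, and let φ : ℝⁿ → ℝ be a function with |φ(x)| ≤ M for all x and |φ(x) − φ(y)| ≤ (M/R)‖x − y‖ for all x, y. Then there exists a constant C > 0, depending only on n, β, δ and c, such that for every integrable A : ℝⁿ → ℝ, ∫_{ℝⁿ} ∫_{ℝⁿ} |φ(x) − φ(x−y)| |A(x−y)| π(y) dy dx ≤ C M (R^{-2β} + R^{-2δ}) ‖A‖_{L¹}. -/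

import Mathlib

open MeasureTheory Set Metric
open scoped ENNReal

namespace CommutatorAux

noncomputable def sphC (n : ℕ) : ℝ≥0∞ :=
  Measure.toSphere (volume : Measure (EuclideanSpace ℝ (Fin n))) univ

lemma sphC_ne_top (n : ℕ) : sphC n ≠ ⊤ := measure_ne_top _ _

lemma lintegral_norm_polar {n : ℕ} (hn : 1 ≤ n) (f : ℝ → ℝ≥0∞) (hf : Measurable f) :
    ∫⁻ x : EuclideanSpace ℝ (Fin n), f ‖x‖ =
      sphC n * ∫⁻ r in Ioi (0 : ℝ), ENNReal.ofReal (r ^ (n - 1)) * f r := by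
  haveI : Nontrivial (EuclideanSpace ℝ (Fin n)) :=
    Module.nontrivial_of_finrank_pos (R := ℝ) (by rw [finrank_euclideanSpace_fin]; omega)
  have hdim : Module.finrank ℝ (EuclideanSpace ℝ (Fin n)) = n := finrank_euclideanSpace_fin
  have hmeas2 :
      Measurable fun p : sphere (0 : EuclideanSpace ℝ (Fin n)) 1 × Ioi (0 : ℝ) => f p.2.1 :=
    hf.comp (measurable_subtype_coe.comp measurable_snd)
  calc
    ∫⁻ x : EuclideanSpace ℝ (Fin n), f ‖x‖
        = ∫⁻ x in ({0}ᶜ : Set (EuclideanSpace ℝ (Fin n))), f ‖x‖ := by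
          rw [restrict_compl_singleton]
    _ = ∫⁻ x : ({0}ᶜ : Set (EuclideanSpace ℝ (Fin n))), f ‖(x : EuclideanSpace ℝ (Fin n))‖
          ∂((volume : Measure (EuclideanSpace ℝ (Fin n))).comap Subtype.val) :=
        (lintegral_subtype_comap (measurableSet_singleton 0).compl _).symm
    _ = ∫⁻ p : sphere (0 : EuclideanSpace ℝ (Fin n)) 1 × Ioi (0 : ℝ), f p.2.1
          ∂((volume : Measure (EuclideanSpace ℝ (Fin n))).toSphere.prod
              (Measure.volumeIoiPow (Module.finrank ℝ (EuclideanSpace ℝ (Fin n)) - 1))) :=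
        by rw [← (Measure.measurePreserving_homeomorphUnitSphereProd
            (volume : Measure (EuclideanSpace ℝ (Fin n)))).lintegral_comp hmeas2]
           congr 1; funext x; simp [homeomorphUnitSphereProd]
    _ = sphC n * ∫⁻ r : Ioi (0 : ℝ), f r.1 ∂(Measure.volumeIoiPow (n - 1)) := by
        rw [hdim, lintegral_prod _ hmeas2.aemeasurable]
        simp only [lintegral_const]
        rw [mul_comm]
        rfl
    _ = sphC n * ∫⁻ r in Ioi (0 : ℝ), ENNReal.ofReal (r ^ (n - 1)) * f r := by
        congr 1
        rw [Measure.volumeIoiPow,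
          lintegral_withDensity_eq_lintegral_mul _
            ((measurable_subtype_coe.pow_const _).ennreal_ofReal)
            (show Measurable fun r : Ioi (0 : ℝ) => f r.1 from hf.comp measurable_subtype_coe)]
        simp only [Pi.mul_apply]
        exact lintegral_subtype_comap measurableSet_Ioi
          (fun r => ENNReal.ofReal (r ^ (n - 1)) * f r)

lemma one_dim_bound {m : ℕ} (hm : 1 ≤ m) {s R : ℝ} (hs0 : 0 < s) (hs : s < 1 / 2) (hR : 0 < R) :
    ∫⁻ r in Ioi (0 : ℝ), ENNReal.ofReal (r ^ (m - 1)) *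
        ENNReal.ofReal (min 1 (r / R) * r ^ (-(m : ℝ) - 2 * s))
      ≤ ENNReal.ofReal ((1 / (1 - 2 * s) + 1 / (2 * s)) * R ^ (-(2 * s))) := by
  have h2s : 2 * s < 1 := by linarith
  have key : ∀ r ∈ Ioi (0 : ℝ),
      ENNReal.ofReal (r ^ (m - 1)) * ENNReal.ofReal (min 1 (r / R) * r ^ (-(m : ℝ) - 2 * s)) =
        ENNReal.ofReal (min 1 (r / R) * r ^ (-1 - 2 * s)) := by
    intro r hr
    have hr0 : (0 : ℝ) < r := hr
    rw [← ENNReal.ofReal_mul (by positivity)]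
    congr 1
    have hpow : (r : ℝ) ^ (m - 1) = r ^ ((m : ℝ) - 1) := by
      rw [← Real.rpow_natCast r (m - 1)]
      congr 1
      push_cast [Nat.cast_sub hm]
      ring
    rw [hpow, mul_left_comm, ← Real.rpow_add hr0]
    congr 2
    ring
  rw [setLIntegral_congr_fun measurableSet_Ioi key]
  have hsplit : Ioc (0 : ℝ) R ∪ Ioi R = Ioi 0 := Ioc_union_Ioi_eq_Ioi hR.le
  calc
    ∫⁻ r in Ioi (0 : ℝ), ENNReal.ofReal (min 1 (r / R) * r ^ (-1 - 2 * s))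
        = ∫⁻ r in Ioc (0 : ℝ) R ∪ Ioi R, ENNReal.ofReal (min 1 (r / R) * r ^ (-1 - 2 * s)) := by
          rw [hsplit]
    _ ≤ (∫⁻ r in Ioc (0 : ℝ) R, ENNReal.ofReal (min 1 (r / R) * r ^ (-1 - 2 * s))) +
          ∫⁻ r in Ioi R, ENNReal.ofReal (min 1 (r / R) * r ^ (-1 - 2 * s)) :=
        lintegral_union_le _ _ _
    _ ≤ ENNReal.ofReal (1 / (1 - 2 * s) * R ^ (-(2 * s))) +
          ENNReal.ofReal (1 / (2 * s) * R ^ (-(2 * s))) := by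
        gcongr ?_ + ?_
        · -- near zero
          have hb : ∀ r ∈ Ioc (0 : ℝ) R,
              ENNReal.ofReal (min 1 (r / R) * r ^ (-1 - 2 * s)) ≤
                ENNReal.ofReal (R⁻¹ * r ^ (-(2 * s))) := by
            intro r hr
            apply ENNReal.ofReal_le_ofReal
            have hr0 : (0 : ℝ) < r := hr.1
            have hmul : r * r ^ (-1 - 2 * s) = r ^ (-(2 * s)) := by
              have h1 := Real.rpow_one_add' hr0.le
                (show (1 : ℝ) + (-1 - 2 * s) ≠ 0 by intro h; nlinarith)
              calc r * r ^ (-1 - 2 * s) = r ^ ((1 : ℝ) + (-1 - 2 * s)) := h1.symm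
                _ = r ^ (-(2 * s)) := by congr 1; ring
            calc min 1 (r / R) * r ^ (-1 - 2 * s)
                ≤ (r / R) * r ^ (-1 - 2 * s) :=
                  mul_le_mul_of_nonneg_right (min_le_right _ _) (Real.rpow_nonneg hr0.le _)
              _ = R⁻¹ * (r * r ^ (-1 - 2 * s)) := by ring
              _ = R⁻¹ * r ^ (-(2 * s)) := by rw [hmul]
          refine le_trans (setLIntegral_mono' measurableSet_Ioc hb) ?_
          have hint : IntegrableOn (fun r : ℝ => R⁻¹ * r ^ (-(2 * s))) (Ioc 0 R) := by
            refine Integrable.const_mul ?_ _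
            exact (intervalIntegral.intervalIntegrable_rpow' (by linarith)).1
          rw [← ofReal_integral_eq_lintegral_ofReal hint ?nn]
          case nn =>
            filter_upwards [ae_restrict_mem measurableSet_Ioc] with r hr
            have : (0 : ℝ) < r := hr.1
            positivity
          apply ENNReal.ofReal_le_ofReal
          rw [MeasureTheory.integral_const_mul]
          have hval : ∫ r in Ioc (0 : ℝ) R, r ^ (-(2 * s)) =
              (R ^ (-(2 * s) + 1) - (0 : ℝ) ^ (-(2 * s) + 1)) / (-(2 * s) + 1) := by
            rw [← intervalIntegral.integral_of_le hR.le]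
            exact integral_rpow (Or.inl (by linarith))
          rw [hval, Real.zero_rpow (by intro h; nlinarith)]
          have hRpow : R ^ (-(2 * s) + 1) = R ^ (-(2 * s)) * R := by
            rw [Real.rpow_add hR, Real.rpow_one]
          rw [hRpow, sub_zero, ← mul_div_assoc, mul_comm (R ^ (-(2 * s))) R,
            inv_mul_cancel_left₀ hR.ne']
          apply le_of_eq
          ring
        · -- near infinity
          have hb : ∀ r ∈ Ioi R,
              ENNReal.ofReal (min 1 (r / R) * r ^ (-1 - 2 * s)) ≤
                ENNReal.ofReal (r ^ (-1 - 2 * s)) := by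
            intro r hr
            have hr0 : (0 : ℝ) < r := lt_trans hR hr
            exact ENNReal.ofReal_le_ofReal
              (mul_le_of_le_one_left (Real.rpow_nonneg hr0.le _) (min_le_left _ _))
          refine le_trans (setLIntegral_mono' measurableSet_Ioi hb) ?_
          have hint : IntegrableOn (fun r : ℝ => r ^ (-1 - 2 * s)) (Ioi R) :=
            integrableOn_Ioi_rpow_of_lt (by linarith) hR
          rw [← ofReal_integral_eq_lintegral_ofReal hint ?nn2]
          case nn2 =>
            filter_upwards [ae_restrict_mem measurableSet_Ioi] with r hr
            have : (0 : ℝ) < r := lt_trans hR hr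
            positivity
          apply ENNReal.ofReal_le_ofReal
          rw [integral_Ioi_rpow_of_lt (by linarith) hR]
          have h2 : (2 : ℝ) * s ≠ 0 := by positivity
          have he : (-1 - 2 * s + 1 : ℝ) = -(2 * s) := by ring
          rw [he]
          apply le_of_eq
          have h3 : (-(2 * s) : ℝ) ≠ 0 := by intro h; nlinarith
          field_simp
    _ = ENNReal.ofReal ((1 / (1 - 2 * s) + 1 / (2 * s)) * R ^ (-(2 * s))) := by
        rw [← ENNReal.ofReal_add
          (mul_nonneg (le_of_lt (one_div_pos.mpr (by linarith))) (Real.rpow_nonneg hR.le _))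
          (mul_nonneg (le_of_lt (one_div_pos.mpr (by linarith))) (Real.rpow_nonneg hR.le _))]
        congr 1
        ring



lemma phi_bound {E : Type*} [NormedAddCommGroup E] {R M : ℝ} (hR : 0 < R) (hM : 0 < M)
    (φ : E → ℝ) (hb : ∀ x, |φ x| ≤ M) (hlip : ∀ x y, |φ x - φ y| ≤ M / R * ‖x - y‖) :
    ∀ x y : E, |φ x - φ (x - y)| ≤ 2 * M * min 1 (‖y‖ / R) := by
  intro x y
  rcases le_total (‖y‖ / R) 1 with h | h
  · rw [min_eq_right h]
    calc |φ x - φ (x - y)| ≤ M / R * ‖x - (x - y)‖ := hlip x (x - y)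
      _ = M * (‖y‖ / R) := by rw [sub_sub_cancel]; ring
      _ ≤ 2 * M * (‖y‖ / R) := by
          have h0 : 0 ≤ ‖y‖ / R := div_nonneg (norm_nonneg _) hR.le
          nlinarith
  · rw [min_eq_left h]
    calc |φ x - φ (x - y)| ≤ |φ x| + |φ (x - y)| := by
          simpa [sub_eq_add_neg] using abs_add_le (φ x) (-φ (x - y))
      _ ≤ M + M := add_le_add (hb x) (hb _)
      _ = 2 * M * 1 := by ring

end CommutatorAux

open CommutatorAux in
/-- `L¹` bound for the commutator `[𝓛, φ]A` between a Lévy operator with kernel `π` and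
multiplication by a rescaled cutoff `φ`. -/
theorem commutator_L1_bound
    (n : ℕ) (hn : 1 ≤ n) (β δ c : ℝ)
    (hβ0 : 0 < β) (hβ : β < 1 / 2) (hδ0 : 0 < δ) (hδ : δ < 1 / 2) (hc : 0 < c)
    (π : EuclideanSpace ℝ (Fin n) → ℝ) (hπmeas : Measurable π) (hπ0 : ∀ y, 0 ≤ π y)
    (hπub : ∀ y : EuclideanSpace ℝ (Fin n), y ≠ 0 →
      π y ≤ c * (‖y‖ ^ (-(n : ℝ) - 2 * β) + ‖y‖ ^ (-(n : ℝ) - 2 * δ))) :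
    ∃ C : ℝ, 0 < C ∧ ∀ (R M : ℝ), 0 < R → 0 < M →
      ∀ φ : EuclideanSpace ℝ (Fin n) → ℝ,
        (∀ x, |φ x| ≤ M) → (∀ x y, |φ x - φ y| ≤ M / R * ‖x - y‖) →
        ∀ A : EuclideanSpace ℝ (Fin n) → ℝ, Integrable A volume →
          (∫⁻ x, ∫⁻ y, ENNReal.ofReal (|φ x - φ (x - y)| * |A (x - y)| * π y))
            ≤ ENNReal.ofReal
                (C * M * (R ^ (-(2 * β)) + R ^ (-(2 * δ))) * ∫ x, |A x|) := by
  have hKb0 : (0 : ℝ) < 1 / (1 - 2 * β) + 1 / (2 * β) :=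
    add_pos (one_div_pos.mpr (by linarith)) (one_div_pos.mpr (by linarith))
  have hKd0 : (0 : ℝ) < 1 / (1 - 2 * δ) + 1 / (2 * δ) :=
    add_pos (one_div_pos.mpr (by linarith)) (one_div_pos.mpr (by linarith))
  set κ : ℝ := (sphC n).toReal with hκdef
  have hκ0 : 0 ≤ κ := ENNReal.toReal_nonneg
  refine ⟨2 * c * (κ + 1) * ((1 / (1 - 2 * β) + 1 / (2 * β)) + (1 / (1 - 2 * δ) + 1 / (2 * δ))),
    by positivity, ?_⟩
  intro R M hR hM φ hφb hφlip A hA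
  have hφ2 := phi_bound hR hM φ hφb hφlip
  set B := hA.1.mk A with hBdef
  have hBm : Measurable B := hA.1.stronglyMeasurable_mk.measurable
  have hAB : A =ᵐ[volume] B := hA.1.ae_eq_mk
  have hBabs : Measurable fun z : EuclideanSpace ℝ (Fin n) => |B z| := by
    simpa only [Real.norm_eq_abs] using hBm.norm
  set g : EuclideanSpace ℝ (Fin n) → ℝ≥0∞ :=
    fun y => ENNReal.ofReal (2 * M * min 1 (‖y‖ / R) * π y) with hgdef
  have hminmeas : Measurable fun y : EuclideanSpace ℝ (Fin n) => min 1 (‖y‖ / R) :=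
    measurable_const.min (measurable_norm.div_const R)
  have hgm : Measurable g :=
    ((measurable_const.mul hminmeas).mul hπmeas).ennreal_ofReal
  have hIA : 0 ≤ ∫ x, |A x| := integral_nonneg fun x => abs_nonneg _
  have hIAl : ∫⁻ x, ENNReal.ofReal |B x| = ENNReal.ofReal (∫ x, |A x|) := by
    have h1 : ∫⁻ x, ENNReal.ofReal |B x| = ∫⁻ x, ENNReal.ofReal |A x| := by
      apply lintegral_congr_ae
      filter_upwards [hAB] with x hx
      rw [hx]
    rw [h1, ← ofReal_integral_eq_lintegral_ofReal hA.abs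
      (Filter.Eventually.of_forall fun x => abs_nonneg _)]
  -- step 1 : pointwise bound and replacement of `A` by its measurable representative
  have step1 : ∀ x, ∫⁻ y, ENNReal.ofReal (|φ x - φ (x - y)| * |A (x - y)| * π y) ≤
      ∫⁻ y, g y * ENNReal.ofReal |B (x - y)| := by
    intro x
    have e1 : ∫⁻ y, ENNReal.ofReal (|φ x - φ (x - y)| * |A (x - y)| * π y) ≤
        ∫⁻ y, g y * ENNReal.ofReal |A (x - y)| := by
      apply lintegral_mono
      intro y
      have hnn : 0 ≤ 2 * M * min 1 (‖y‖ / R) * π y :=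
        mul_nonneg (mul_nonneg (by positivity)
          (le_min zero_le_one (div_nonneg (norm_nonneg _) hR.le))) (hπ0 y)
      show ENNReal.ofReal (|φ x - φ (x - y)| * |A (x - y)| * π y) ≤
        ENNReal.ofReal (2 * M * min 1 (‖y‖ / R) * π y) * ENNReal.ofReal |A (x - y)|
      rw [← ENNReal.ofReal_mul hnn]
      apply ENNReal.ofReal_le_ofReal
      calc |φ x - φ (x - y)| * |A (x - y)| * π y
          = (|φ x - φ (x - y)| * π y) * |A (x - y)| := by ring
        _ ≤ (2 * M * min 1 (‖y‖ / R) * π y) * |A (x - y)| := by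
            apply mul_le_mul_of_nonneg_right _ (abs_nonneg _)
            exact mul_le_mul_of_nonneg_right (hφ2 x y) (hπ0 y)
    have e2 : ∫⁻ y, g y * ENNReal.ofReal |A (x - y)| =
        ∫⁻ y, g y * ENNReal.ofReal |B (x - y)| := by
      apply lintegral_congr_ae
      have hsub : (fun y : EuclideanSpace ℝ (Fin n) => A (x - y)) =ᵐ[volume]
          (fun y => B (x - y)) :=
        (Measure.measurePreserving_sub_left volume x).quasiMeasurePreserving.ae_eq_comp hAB
      filter_upwards [hsub] with y hy
      rw [show A (x - y) = B (x - y) from hy]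
    exact e1.trans_eq e2
  -- bound for the kernel integral
  have hstep5 : ∀ y : EuclideanSpace ℝ (Fin n), g y ≤ ENNReal.ofReal (2 * M * c) *
      ENNReal.ofReal (min 1 (‖y‖ / R) *
        (‖y‖ ^ (-(n : ℝ) - 2 * β) + ‖y‖ ^ (-(n : ℝ) - 2 * δ))) := by
    intro y
    rw [hgdef, ← ENNReal.ofReal_mul (by positivity)]
    apply ENNReal.ofReal_le_ofReal
    have hmin : 0 ≤ min 1 (‖y‖ / R) := le_min zero_le_one (div_nonneg (norm_nonneg _) hR.le)
    by_cases hy : y = 0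
    · subst hy
      simp only [norm_zero, zero_div]
      rw [min_eq_right (by norm_num : (0 : ℝ) ≤ 1)]
      simp
    · calc 2 * M * min 1 (‖y‖ / R) * π y
          ≤ 2 * M * min 1 (‖y‖ / R) *
            (c * (‖y‖ ^ (-(n : ℝ) - 2 * β) + ‖y‖ ^ (-(n : ℝ) - 2 * δ))) := by
            apply mul_le_mul_of_nonneg_left (hπub y hy)
            exact mul_nonneg (by positivity) hmin
        _ = 2 * M * c * (min 1 (‖y‖ / R) *
            (‖y‖ ^ (-(n : ℝ) - 2 * β) + ‖y‖ ^ (-(n : ℝ) - 2 * δ))) := by ring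
  have hf_meas : Measurable (fun r : ℝ => ENNReal.ofReal (min 1 (r / R) *
      (r ^ (-(n : ℝ) - 2 * β) + r ^ (-(n : ℝ) - 2 * δ)))) := by
    apply Measurable.ennreal_ofReal
    exact (measurable_const.min (measurable_id.div_const R)).mul
      ((measurable_id.pow_const _).add (measurable_id.pow_const _))
  have hpolar := lintegral_norm_polar hn _ hf_meas
  have hsplit7 : ∫⁻ r in Set.Ioi (0 : ℝ), ENNReal.ofReal (r ^ (n - 1)) *
      ENNReal.ofReal (min 1 (r / R) * (r ^ (-(n : ℝ) - 2 * β) + r ^ (-(n : ℝ) - 2 * δ)))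
      ≤ ENNReal.ofReal ((1 / (1 - 2 * β) + 1 / (2 * β)) * R ^ (-(2 * β))) +
        ENNReal.ofReal ((1 / (1 - 2 * δ) + 1 / (2 * δ)) * R ^ (-(2 * δ))) := by
    have hsum : ∀ r ∈ Set.Ioi (0 : ℝ), ENNReal.ofReal (r ^ (n - 1)) *
        ENNReal.ofReal (min 1 (r / R) * (r ^ (-(n : ℝ) - 2 * β) + r ^ (-(n : ℝ) - 2 * δ)))
        = ENNReal.ofReal (r ^ (n - 1)) * ENNReal.ofReal (min 1 (r / R) * r ^ (-(n : ℝ) - 2 * β))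
          + ENNReal.ofReal (r ^ (n - 1)) *
            ENNReal.ofReal (min 1 (r / R) * r ^ (-(n : ℝ) - 2 * δ)) := by
      intro r hr
      have hr0 : (0 : ℝ) < r := hr
      have hmin : 0 ≤ min 1 (r / R) := le_min zero_le_one (by positivity)
      rw [mul_add (min 1 (r / R)),
        ENNReal.ofReal_add (mul_nonneg hmin (Real.rpow_nonneg hr0.le _))
          (mul_nonneg hmin (Real.rpow_nonneg hr0.le _)), mul_add]
    rw [setLIntegral_congr_fun measurableSet_Ioi hsum]
    rw [lintegral_add_left (f := fun x : ℝ => ENNReal.ofReal (x ^ (n - 1)) *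
      ENNReal.ofReal (min 1 (x / R) * x ^ (-(n : ℝ) - 2 * β))) ((measurable_id'.pow_const _).ennreal_ofReal.mul
      (((measurable_const.min (measurable_id'.div_const R)).mul
        (measurable_id'.pow_const _)).ennreal_ofReal))]
    exact add_le_add (one_dim_bound hn hβ0 hβ hR) (one_dim_bound hn hδ0 hδ hR)
  have hg_total : ∫⁻ y, g y ≤ ENNReal.ofReal (2 * M * c) * (sphC n *
      (ENNReal.ofReal ((1 / (1 - 2 * β) + 1 / (2 * β)) * R ^ (-(2 * β))) +
        ENNReal.ofReal ((1 / (1 - 2 * δ) + 1 / (2 * δ)) * R ^ (-(2 * δ))))) := by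
    calc ∫⁻ y, g y
        ≤ ∫⁻ y, ENNReal.ofReal (2 * M * c) * ENNReal.ofReal (min 1 (‖y‖ / R) *
            (‖y‖ ^ (-(n : ℝ) - 2 * β) + ‖y‖ ^ (-(n : ℝ) - 2 * δ))) := lintegral_mono hstep5
      _ = ENNReal.ofReal (2 * M * c) * ∫⁻ y, ENNReal.ofReal (min 1 (‖y‖ / R) *
            (‖y‖ ^ (-(n : ℝ) - 2 * β) + ‖y‖ ^ (-(n : ℝ) - 2 * δ))) :=
          lintegral_const_mul' _ _ ENNReal.ofReal_ne_top
      _ = ENNReal.ofReal (2 * M * c) * (sphC n * ∫⁻ r in Set.Ioi (0 : ℝ),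
            ENNReal.ofReal (r ^ (n - 1)) * ENNReal.ofReal (min 1 (r / R) *
              (r ^ (-(n : ℝ) - 2 * β) + r ^ (-(n : ℝ) - 2 * δ)))) := by rw [hpolar]
      _ ≤ _ := by gcongr
  -- main chain
  calc ∫⁻ x, ∫⁻ y, ENNReal.ofReal (|φ x - φ (x - y)| * |A (x - y)| * π y)
      ≤ ∫⁻ x, ∫⁻ y, g y * ENNReal.ofReal |B (x - y)| := lintegral_mono step1
    _ = ∫⁻ y, ∫⁻ x, g y * ENNReal.ofReal |B (x - y)| := by
        apply lintegral_lintegral_swap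
        exact ((hgm.comp measurable_snd).mul
          ((hBabs.comp (measurable_fst.sub measurable_snd)).ennreal_ofReal)).aemeasurable
    _ = ∫⁻ y, g y * ENNReal.ofReal (∫ x, |A x|) := by
        apply lintegral_congr
        intro y
        rw [lintegral_const_mul' _ _ ENNReal.ofReal_ne_top]
        congr 1
        rw [lintegral_sub_right_eq_self (fun x => ENNReal.ofReal |B x|) y]
        exact hIAl
    _ = (∫⁻ y, g y) * ENNReal.ofReal (∫ x, |A x|) :=
        lintegral_mul_const' _ _ ENNReal.ofReal_ne_top
    _ ≤ (ENNReal.ofReal (2 * M * c) * (sphC n *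
          (ENNReal.ofReal ((1 / (1 - 2 * β) + 1 / (2 * β)) * R ^ (-(2 * β))) +
            ENNReal.ofReal ((1 / (1 - 2 * δ) + 1 / (2 * δ)) * R ^ (-(2 * δ)))))) *
          ENNReal.ofReal (∫ x, |A x|) := by gcongr
    _ ≤ ENNReal.ofReal (2 * c * (κ + 1) *
          ((1 / (1 - 2 * β) + 1 / (2 * β)) + (1 / (1 - 2 * δ) + 1 / (2 * δ))) * M *
          (R ^ (-(2 * β)) + R ^ (-(2 * δ))) * ∫ x, |A x|) := by
        have hX : (0 : ℝ) < R ^ (-(2 * β)) := Real.rpow_pos_of_pos hR _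
        have hY : (0 : ℝ) < R ^ (-(2 * δ)) := Real.rpow_pos_of_pos hR _
        have hsph : sphC n = ENNReal.ofReal κ := (ENNReal.ofReal_toReal (sphC_ne_top n)).symm
        rw [hsph, ← ENNReal.ofReal_add (by positivity) (by positivity),
          ← ENNReal.ofReal_mul hκ0, ← ENNReal.ofReal_mul (by positivity),
          ← ENNReal.ofReal_mul (by positivity)]
        apply ENNReal.ofReal_le_ofReal
        have key : 2 * c * (κ * ((1 / (1 - 2 * β) + 1 / (2 * β)) * R ^ (-(2 * β)) +
            (1 / (1 - 2 * δ) + 1 / (2 * δ)) * R ^ (-(2 * δ)))) ≤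
            2 * c * (κ + 1) *
              ((1 / (1 - 2 * β) + 1 / (2 * β)) + (1 / (1 - 2 * δ) + 1 / (2 * δ))) *
              (R ^ (-(2 * β)) + R ^ (-(2 * δ))) := by
          nlinarith [mul_nonneg hKb0.le hX.le, mul_nonneg hKd0.le hY.le,
            mul_nonneg hKb0.le hY.le, mul_nonneg hKd0.le hX.le,
            mul_nonneg (mul_nonneg hκ0 hKb0.le) hY.le,
            mul_nonneg (mul_nonneg hκ0 hKd0.le) hX.le]
        calc 2 * M * c * (κ * ((1 / (1 - 2 * β) + 1 / (2 * β)) * R ^ (-(2 * β)) +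
              (1 / (1 - 2 * δ) + 1 / (2 * δ)) * R ^ (-(2 * δ)))) * ∫ x, |A x|
            = (2 * c * (κ * ((1 / (1 - 2 * β) + 1 / (2 * β)) * R ^ (-(2 * β)) +
              (1 / (1 - 2 * δ) + 1 / (2 * δ)) * R ^ (-(2 * δ))))) * (M * ∫ x, |A x|) := by
              ring
          _ ≤ (2 * c * (κ + 1) *
              ((1 / (1 - 2 * β) + 1 / (2 * β)) + (1 / (1 - 2 * δ) + 1 / (2 * δ))) *
              (R ^ (-(2 * β)) + R ^ (-(2 * δ)))) * (M * ∫ x, |A x|) :=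
              mul_le_mul_of_nonneg_right key (by positivity)
          _ = 2 * c * (κ + 1) *
              ((1 / (1 - 2 * β) + 1 / (2 * β)) + (1 / (1 - 2 * δ) + 1 / (2 * δ))) * M *
              (R ^ (-(2 * β)) + R ^ (-(2 * δ))) * ∫ x, |A x| := by ring
    _ = ENNReal.ofReal (2 * c * (κ + 1) *
          ((1 / (1 - 2 * β) + 1 / (2 * β)) + (1 / (1 - 2 * δ) + 1 / (2 * δ))) * M *
          (R ^ (-(2 * β)) + R ^ (-(2 * δ))) * ∫ x, |A x|) := rfl
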